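/- Let α > 0 and μ the measure x^α dx on (0,∞). Let I ⊆ (0,∞) be an interval with center c_I and length τ, and let a = μ(I)⁻¹ 𝟙_I. If P_t(x,y) satisfies the Gaussian upper bound P_t(x,y) ≤ C μ(B(x,√t))⁻¹ exp(-|x-y|²/(c t)), then ∫_{|x-c_I| ≥ 2τ} sup_{0 < t ≤ τ²} ∫_I P_t(x,y) a(y) dμ(y) dμ(x) ≤ C', with C' depending only on α, C, c. -/

import Mathlib

open MeasureTheory

noncomputable def besselMeasure (α : ℝ) : Measure ℝ :=
  (volume.restrict (Set.Ioi (0 : ℝ))).withDensity fun x => ENNReal.ofReal (x ^ α)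

open Set Real Filter
open scoped NNReal ENNReal

lemma besselMeasure_apply (α : ℝ) {s : Set ℝ} (hs : MeasurableSet s) :
    besselMeasure α s = ∫⁻ x in s ∩ Set.Ioi 0, ENNReal.ofReal (x ^ α) := by
  rw [besselMeasure, withDensity_apply _ hs, Measure.restrict_restrict hs]

lemma besselMeasure_lt_top {α b : ℝ} (hα : 0 ≤ α) {s : Set ℝ} (hs : MeasurableSet s)
    (hsub : s ⊆ Set.Iic b) (hb : 0 < b) : besselMeasure α s < ⊤ := by
  rw [besselMeasure_apply α hs]
  calc ∫⁻ x in s ∩ Set.Ioi 0, ENNReal.ofReal (x ^ α)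
      ≤ ∫⁻ _ in s ∩ Set.Ioi 0, ENNReal.ofReal (b ^ α) := by
        refine setLIntegral_mono measurable_const fun x hx => ?_
        exact ENNReal.ofReal_le_ofReal
          (Real.rpow_le_rpow (le_of_lt hx.2) (hsub hx.1) hα)
    _ = ENNReal.ofReal (b ^ α) * volume (s ∩ Set.Ioi 0) := setLIntegral_const _ _
    _ ≤ ENNReal.ofReal (b ^ α) * volume (Set.Ioc 0 b) := by
        gcongr
        exact fun x hx => ⟨hx.2, hsub hx.1⟩
    _ < ⊤ := by
        rw [Real.volume_Ioc]
        exact ENNReal.mul_lt_top ENNReal.ofReal_lt_top ENNReal.ofReal_lt_top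

lemma besselMeasure_Ioo_ge {α a b : ℝ} (hα : 0 ≤ α) (ha : 0 < a) (hab : a ≤ b) :
    ENNReal.ofReal (a ^ α * (b - a)) ≤ besselMeasure α (Set.Ioo a b) := by
  rw [besselMeasure_apply α measurableSet_Ioo]
  have h1 : Set.Ioo a b ∩ Set.Ioi 0 = Set.Ioo a b :=
    Set.inter_eq_left.2 fun x hx => lt_trans ha hx.1
  rw [h1, ENNReal.ofReal_mul (Real.rpow_nonneg ha.le α)]
  calc ENNReal.ofReal (a ^ α) * ENNReal.ofReal (b - a)
      = ENNReal.ofReal (a ^ α) * volume (Set.Ioo a b) := by rw [Real.volume_Ioo]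
    _ = ∫⁻ _ in Set.Ioo a b, ENNReal.ofReal (a ^ α) := (setLIntegral_const _ _).symm
    _ ≤ ∫⁻ x in Set.Ioo a b, ENNReal.ofReal (x ^ α) := by
        refine setLIntegral_mono
          ((Real.continuous_rpow_const hα).measurable.ennreal_ofReal) fun x hx => ?_
        exact ENNReal.ofReal_le_ofReal (Real.rpow_le_rpow ha.le hx.1.le hα)

lemma besselMeasure_ball_ge {α : ℝ} (hα : 0 ≤ α) {x r : ℝ} (hx : 0 < x) (hr : 0 < r) :
    ENNReal.ofReal (x ^ α * r) ≤ besselMeasure α (Metric.ball x r ∩ Set.Ioi 0) := by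
  have hsub : Set.Ioo x (x + r) ⊆ Metric.ball x r ∩ Set.Ioi 0 := by
    intro y hy
    constructor
    · rw [Real.ball_eq_Ioo]
      exact ⟨by linarith [hy.1], hy.2⟩
    · exact lt_trans hx hy.1
  refine le_trans ?_ (measure_mono hsub)
  have := besselMeasure_Ioo_ge (a := x) (b := x + r) hα hx (by linarith)
  simpa using this

lemma invsq_hasDeriv {b x : ℝ} (hx : x ≠ b) :
    HasDerivAt (fun y => -(y - b)⁻¹) (((x - b) ^ 2)⁻¹) x := by
  have h1 : HasDerivAt (fun y : ℝ => y - b) 1 x := (hasDerivAt_id x).sub_const b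
  have h2 : HasDerivAt (fun y => -(y - b)⁻¹) (-(-1 / (x - b) ^ 2)) x := (h1.inv (sub_ne_zero.2 hx)).neg
  convert h2 using 1
  ring

lemma invsq_tendsto (b : ℝ) :
    Tendsto (fun y : ℝ => -(y - b)⁻¹) atTop (nhds 0) := by
  have h1 : Tendsto (fun y : ℝ => y - b) atTop atTop :=
    tendsto_atTop_add_const_right _ (-b) tendsto_id
  have := (tendsto_inv_atTop_zero.comp h1).neg
  simpa using this

lemma invsq_integrableOn (b d : ℝ) (hd : 0 < d) :
    IntegrableOn (fun x => ((x - b) ^ 2)⁻¹) (Set.Ioi (b + d)) := by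
  refine integrableOn_Ioi_deriv_of_nonneg'
    (g := fun y => -(y - b)⁻¹) (fun x hx => invsq_hasDeriv ?_) (fun x hx => ?_)
    (invsq_tendsto b)
  · have : b + d ≤ x := hx
    intro h; rw [h] at this; linarith
  · positivity

lemma invsq_integral (b d : ℝ) (hd : 0 < d) :
    ∫ x in Set.Ioi (b + d), ((x - b) ^ 2)⁻¹ = d⁻¹ := by
  have h := integral_Ioi_of_hasDerivAt_of_tendsto'
    (f := fun y => -(y - b)⁻¹) (f' := fun x => ((x - b) ^ 2)⁻¹)
    (fun x hx => invsq_hasDeriv (by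
      have : b + d ≤ x := hx
      intro h; rw [h] at this; linarith))
    (invsq_integrableOn b d hd) (invsq_tendsto b)
  rw [h]
  show 0 - -(b + d - b)⁻¹ = d⁻¹
  rw [add_sub_cancel_left]
  ring

lemma invsq_integrableOn_Iic (b d : ℝ) (hd : 0 < d) :
    IntegrableOn (fun x => ((x - b) ^ 2)⁻¹) (Set.Iic (b - d)) := by
  have h := invsq_integrableOn (-b) d hd
  rw [← (Measure.measurePreserving_neg (volume : Measure ℝ)).integrableOn_comp_preimage
      (Homeomorph.neg ℝ).measurableEmbedding] at h
  have hset : (Neg.neg ⁻¹' Set.Ioi (-b + d) : Set ℝ) = Set.Iio (b - d) := by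
    ext x; simp [Set.mem_Ioi, Set.mem_Iio]; constructor <;> intro hx <;> linarith
  rw [hset] at h
  have hfun : (fun x : ℝ => ((x - (-b)) ^ 2)⁻¹) ∘ Neg.neg = fun x => ((x - b) ^ 2)⁻¹ := by
    ext x; simp [Function.comp]; ring_nf
  rw [hfun] at h
  rwa [integrableOn_Iic_iff_integrableOn_Iio]

lemma invsq_integral_Iic (b d : ℝ) (hd : 0 < d) :
    ∫ x in Set.Iic (b - d), ((x - b) ^ 2)⁻¹ = d⁻¹ := by
  have h := integral_comp_neg_Ioi (d - b) (fun x => ((x - b) ^ 2)⁻¹)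
  rw [show -(d - b) = b - d by ring] at h
  rw [← h]
  have : (fun x : ℝ => ((-x - b) ^ 2)⁻¹) = fun x => ((x - (-b)) ^ 2)⁻¹ := by
    ext x; ring_nf
  calc ∫ x in Set.Ioi (d - b), ((-x - b) ^ 2)⁻¹
      = ∫ x in Set.Ioi (-b + d), ((x - (-b)) ^ 2)⁻¹ := by
        rw [this, show d - b = -b + d by ring]
    _ = d⁻¹ := invsq_integral (-b) d hd

set_option maxHeartbeats 1000000 in
theorem local_atom_estimate (α C c : ℝ) (hα : 0 < α) (hC : 0 < C) (hc : 0 < c) :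
    ∃ C' > (0 : ℝ), ∀ (P : ℝ → ℝ → ℝ → ℝ) (cI τ : ℝ),
      0 < τ → 0 < cI - τ / 2 →
      (∀ t x y, 0 ≤ P t x y) →
      (∀ t x y, 0 < t → 0 < x → 0 < y →
        P t x y ≤ C *
          (((besselMeasure α) (Metric.ball x (Real.sqrt t) ∩ Set.Ioi 0)).toReal)⁻¹ *
          Real.exp (-(x - y) ^ 2 / (c * t))) →
      (∫ x in {x : ℝ | 0 < x ∧ 2 * τ ≤ |x - cI|},
          (⨆ t ∈ Set.Ioc (0 : ℝ) (τ ^ 2),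
            ∫ y in Set.Icc (cI - τ / 2) (cI + τ / 2),
              P t x y * (((besselMeasure α) (Set.Icc (cI - τ / 2) (cI + τ / 2))).toReal)⁻¹
              ∂(besselMeasure α))
          ∂(besselMeasure α)) ≤ C' := by
  refine ⟨16 * C * c, by positivity, ?_⟩
  intro P cI τ hτ hcI hP0 hPb
  set μ := besselMeasure α with hμdef
  set a0 : ℝ := cI - τ / 2 with ha0def
  set b0 : ℝ := cI + τ / 2 with hb0def
  set J : Set ℝ := Set.Icc a0 b0 with hJdef
  set m : ℝ := (μ J).toReal with hmdef
  set S : Set ℝ := {x : ℝ | 0 < x ∧ 2 * τ ≤ |x - cI|} with hSdef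
  have ha0 : 0 < a0 := hcI
  have hcI2 : 0 < cI - τ / 2 := by rw [← ha0def]; exact hcI
  have hb0 : 0 < b0 := by rw [hb0def]; linarith [hcI2, hτ]
  have ha0b0 : a0 < b0 := by rw [ha0def, hb0def]; linarith [hτ]
  have hSmeas : MeasurableSet S := by
    have : S = Set.Ioi 0 ∩ {x : ℝ | 2 * τ ≤ |x - cI|} := rfl
    rw [this]
    exact measurableSet_Ioi.inter
      (measurableSet_le measurable_const
        ((continuous_abs.comp (continuous_id.sub continuous_const)).measurable))
  have hSsub : S ⊆ Set.Ioi (0 : ℝ) := fun x hx => hx.1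
  -- facts about μ J
  have hJfin : μ J < ⊤ :=
    besselMeasure_lt_top hα.le measurableSet_Icc (fun x hx => hx.2) hb0
  have hJne : μ J ≠ 0 := by
    intro h
    have h1 := (besselMeasure_Ioo_ge hα.le ha0 ha0b0.le).trans
      (measure_mono (Set.Ioo_subset_Icc_self (a := a0) (b := b0)))
    rw [← hμdef, ← hJdef, h, nonpos_iff_eq_zero, ENNReal.ofReal_eq_zero] at h1
    have : 0 < a0 ^ α * (b0 - a0) :=
      mul_pos (Real.rpow_pos_of_pos ha0 α) (by linarith)
    linarith
  have hm : 0 < m := ENNReal.toReal_pos hJne hJfin.ne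
  -- The bound function
  set K : ℝ := 16 / 9 * C * c with hKdef
  have hK : 0 < K := by positivity
  set g : ℝ → ℝ := fun x => K * τ * (x ^ α)⁻¹ * ((x - cI) ^ 2)⁻¹ with hgdef
  set h : ℝ → ℝ := fun x => K * τ * ((x - cI) ^ 2)⁻¹ with hhdef
  -- pointwise estimate on S
  have hpoint : ∀ x ∈ S, (⨆ t ∈ Set.Ioc (0 : ℝ) (τ ^ 2),
      ∫ y in J, P t x y * m⁻¹ ∂μ) ≤ g x := by
    intro x hx
    obtain ⟨hx0, hxd⟩ := hx
    have hxa : (0 : ℝ) < x ^ α := Real.rpow_pos_of_pos hx0 α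
    have hxcI : 0 < |x - cI| := by linarith
    have hxcI2 : 0 < (x - cI) ^ 2 := by rw [← sq_abs]; positivity
    have hgx0 : 0 ≤ g x := by
      simp only [hgdef]
      have h1 : (0:ℝ) ≤ (x ^ α)⁻¹ := inv_nonneg.2 hxa.le
      have h2 : (0:ℝ) ≤ ((x - cI) ^ 2)⁻¹ := inv_nonneg.2 hxcI2.le
      positivity
    refine Real.iSup_le (fun t => Real.iSup_le (fun ht => ?_) hgx0) hgx0
    obtain ⟨ht0, htτ⟩ := ht
    have hst : 0 < Real.sqrt t := Real.sqrt_pos.2 ht0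
    have hball : x ^ α * Real.sqrt t ≤
        (μ (Metric.ball x (Real.sqrt t) ∩ Set.Ioi 0)).toReal := by
      have h1 := besselMeasure_ball_ge hα.le hx0 hst
      have h2 : μ (Metric.ball x (Real.sqrt t) ∩ Set.Ioi 0) < ⊤ := by
        refine besselMeasure_lt_top (b := x + Real.sqrt t) hα.le
          (measurableSet_ball.inter measurableSet_Ioi) (fun y hy => ?_) (by positivity)
        have := hy.1
        rw [Real.ball_eq_Ioo] at this
        exact le_of_lt this.2
      exact (ENNReal.ofReal_le_iff_le_toReal h2.ne).1 h1
    -- pointwise bound on P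
    have key : ∀ y ∈ J, P t x y ≤ g x := by
      intro y hy
      have hy0 : 0 < y := lt_of_lt_of_le ha0 hy.1
      have hycI : |y - cI| ≤ τ / 2 := by
        rw [abs_le]
        constructor
        · have := hy.1; simp only [ha0def] at this; linarith
        · have := hy.2; simp only [hb0def] at this; linarith
      have htri : |x - cI| ≤ |x - y| + |y - cI| := abs_sub_le x y cI
      have hxy : 3 / 4 * |x - cI| ≤ |x - y| := by linarith
      have hxy0 : 0 < |x - y| := lt_of_lt_of_le (by linarith) hxy
      have hxy2 : 0 < (x - y) ^ 2 := by rw [← sq_abs]; positivity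
      have hu : 0 < (x - y) ^ 2 / (c * t) := by positivity
      have hexp : Real.exp (-(x - y) ^ 2 / (c * t)) ≤ c * t / (x - y) ^ 2 := by
        rw [neg_div, Real.exp_neg]
        have hle := Real.add_one_le_exp ((x - y) ^ 2 / (c * t))
        calc (Real.exp ((x - y) ^ 2 / (c * t)))⁻¹
            ≤ ((x - y) ^ 2 / (c * t))⁻¹ := inv_anti₀ hu (by linarith)
          _ = c * t / (x - y) ^ 2 := by rw [inv_div]
      have hinv : ((μ (Metric.ball x (Real.sqrt t) ∩ Set.Ioi 0)).toReal)⁻¹ ≤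
          (x ^ α * Real.sqrt t)⁻¹ := inv_anti₀ (by positivity) hball
      have hstep1 : P t x y ≤ C * (x ^ α * Real.sqrt t)⁻¹ * (c * t / (x - y) ^ 2) := by
        calc P t x y ≤ C * ((μ (Metric.ball x (Real.sqrt t) ∩ Set.Ioi 0)).toReal)⁻¹ *
              Real.exp (-(x - y) ^ 2 / (c * t)) := hPb t x y ht0 hx0 hy0
          _ ≤ C * (x ^ α * Real.sqrt t)⁻¹ * (c * t / (x - y) ^ 2) := by
              apply mul_le_mul
              · exact mul_le_mul_of_nonneg_left hinv hC.le
              · exact hexp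
              · exact (Real.exp_pos _).le
              · positivity
      have heq : C * (x ^ α * Real.sqrt t)⁻¹ * (c * t / (x - y) ^ 2) =
          C * c * (x ^ α)⁻¹ * (t / Real.sqrt t) * ((x - y) ^ 2)⁻¹ := by
        rw [mul_inv]; ring
      rw [Real.div_sqrt] at heq
      have hsqt : Real.sqrt t ≤ τ := by
        rw [show τ = Real.sqrt (τ ^ 2) by rw [Real.sqrt_sq hτ.le]]
        exact Real.sqrt_le_sqrt htτ
      have hinvsq : ((x - y) ^ 2)⁻¹ ≤ 16 / 9 * ((x - cI) ^ 2)⁻¹ := by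
        have h9 : 9 / 16 * (x - cI) ^ 2 ≤ (x - y) ^ 2 := by
          nlinarith [sq_abs (x - cI), sq_abs (x - y), abs_nonneg (x - cI)]
        calc ((x - y) ^ 2)⁻¹ ≤ (9 / 16 * (x - cI) ^ 2)⁻¹ :=
              inv_anti₀ (by positivity) h9
          _ = 16 / 9 * ((x - cI) ^ 2)⁻¹ := by
              rw [mul_inv]; norm_num
      calc P t x y ≤ C * c * (x ^ α)⁻¹ * Real.sqrt t * ((x - y) ^ 2)⁻¹ := by
            rw [← heq]; exact hstep1
        _ ≤ C * c * (x ^ α)⁻¹ * τ * (16 / 9 * ((x - cI) ^ 2)⁻¹) := by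
            apply mul_le_mul
            · apply mul_le_mul_of_nonneg_left hsqt
              positivity
            · exact hinvsq
            · positivity
            · positivity
        _ = g x := by simp only [hgdef, hKdef]; ring
    -- integrate the bound over J
    have hconst : IntegrableOn (fun _ : ℝ => g x * m⁻¹) J μ :=
      integrableOn_const hJfin.ne
    have hmono := integral_mono_of_nonneg (μ := μ.restrict J)
      (f := fun y => P t x y * m⁻¹) (g := fun _ => g x * m⁻¹)
      (Filter.Eventually.of_forall fun y => mul_nonneg (hP0 t x y) (inv_nonneg.2 hm.le))
      hconst
      ((ae_restrict_iff' measurableSet_Icc).2 (Filter.Eventually.of_forall fun y hy =>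
        mul_le_mul_of_nonneg_right (key y hy) (inv_nonneg.2 hm.le)))
    rw [setIntegral_const] at hmono
    calc (∫ y in J, P t x y * m⁻¹ ∂μ) ≤ m • (g x * m⁻¹) := hmono
      _ = g x := by
          rw [smul_eq_mul, mul_comm (g x), ← mul_assoc, mul_inv_cancel₀ hm.ne', one_mul]
  -- the function under the outer integral is nonnegative
  have hF0 : ∀ x : ℝ, 0 ≤ ⨆ t ∈ Set.Ioc (0 : ℝ) (τ ^ 2), ∫ y in J, P t x y * m⁻¹ ∂μ :=
    fun x => Real.iSup_nonneg fun t => Real.iSup_nonneg fun _ =>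
      integral_nonneg fun y => mul_nonneg (hP0 t x y) (inv_nonneg.2 hm.le)
  -- integrability of g over S w.r.t. μ, and of h over T w.r.t. volume
  set T : Set ℝ := Set.Iic (cI - 2 * τ) ∪ Set.Ici (cI + 2 * τ) with hTdef
  have hST : S ⊆ T := by
    intro x hx
    rcases le_abs.1 hx.2 with h1 | h1
    · exact Or.inr (by simp only [Set.mem_Ici]; linarith)
    · exact Or.inl (by simp only [Set.mem_Iic]; linarith)
  have h2τ : 0 < 2 * τ := by linarith
  have hT_int : IntegrableOn h T volume := by
    apply IntegrableOn.union
    · exact (invsq_integrableOn_Iic cI (2 * τ) h2τ).const_mul (K * τ)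
    · have h1 : IntegrableOn (fun x => K * τ * ((x - cI) ^ 2)⁻¹) (Set.Ioi (cI + 2 * τ)) volume :=
        (invsq_integrableOn cI (2 * τ) h2τ).const_mul (K * τ)
      rw [integrableOn_Ici_iff_integrableOn_Ioi]; exact h1
  have hwmeas : Measurable fun x : ℝ => ENNReal.ofReal (x ^ α) :=
    (Real.continuous_rpow_const hα.le).measurable.ennreal_ofReal
  have hrestrict : μ.restrict S =
      (volume.restrict S).withDensity fun x => ENNReal.ofReal (x ^ α) := by
    rw [hμdef, besselMeasure, restrict_withDensity hSmeas,
      Measure.restrict_restrict hSmeas, Set.inter_eq_left.2 hSsub]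
  have hgh : ∀ x ∈ S, g x * (ENNReal.ofReal (x ^ α)).toReal = h x := by
    intro x hx
    have hx0 : 0 < x := hx.1
    have hxa : (0 : ℝ) < x ^ α := Real.rpow_pos_of_pos hx0 α
    have hne : x - cI ≠ 0 := by
      have h1 : 0 < |x - cI| := lt_of_lt_of_le (by linarith) hx.2
      exact abs_pos.1 h1
    rw [ENNReal.toReal_ofReal hxa.le]
    simp only [hgdef, hhdef]
    field_simp
  have hg_int : Integrable g (μ.restrict S) := by
    rw [hrestrict, integrable_withDensity_iff hwmeas
      (Filter.Eventually.of_forall fun x => ENNReal.ofReal_lt_top)]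
    exact ((hT_int.mono_set hST).congr_fun (fun x hx => (hgh x hx).symm) hSmeas :
      IntegrableOn (fun x => g x * (ENNReal.ofReal (x ^ α)).toReal) S volume)
  -- main chain
  have houter : (∫ x in S, (⨆ t ∈ Set.Ioc (0 : ℝ) (τ ^ 2),
        ∫ y in J, P t x y * m⁻¹ ∂μ) ∂μ) ≤ ∫ x in S, g x ∂μ :=
    integral_mono_of_nonneg
      (Filter.Eventually.of_forall fun x => hF0 x)
      hg_int
      ((ae_restrict_iff' hSmeas).2 (Filter.Eventually.of_forall fun x hx => hpoint x hx))
  have hμeq : μ = (volume.restrict (Set.Ioi (0:ℝ))).withDensity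
      fun x => ((Real.toNNReal (x ^ α) : ℝ≥0) : ℝ≥0∞) := rfl
  have hnnmeas : Measurable fun x : ℝ => Real.toNNReal (x ^ α) :=
    (Real.continuous_rpow_const hα.le).measurable.real_toNNReal
  have hgS : (∫ x in S, g x ∂μ) = ∫ x in S, h x ∂volume := by
    rw [hμeq, setIntegral_withDensity_eq_setIntegral_smul hnnmeas g hSmeas,
      Measure.restrict_restrict hSmeas, Set.inter_eq_left.2 hSsub]
    refine setIntegral_congr_fun hSmeas fun x hx => ?_
    have hx0 : 0 < x := hx.1
    have hxa : (0 : ℝ) ≤ x ^ α := (Real.rpow_pos_of_pos hx0 α).le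
    have := hgh x hx
    rw [ENNReal.toReal_ofReal hxa] at this
    rw [NNReal.smul_def, smul_eq_mul, Real.coe_toNNReal _ hxa, mul_comm]
    exact this
  have hhT : (∫ x in S, h x ∂volume) ≤ ∫ x in T, h x ∂volume := by
    refine setIntegral_mono_set hT_int
      (Filter.Eventually.of_forall fun x => ?_)
      (HasSubset.Subset.eventuallyLE hST)
    simp only [hhdef]
    positivity
  have hTval : (∫ x in T, h x ∂volume) = 16 / 9 * C * c := by
    rw [hTdef, setIntegral_union (Set.Iic_disjoint_Ici.2 (by linarith)) measurableSet_Ici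
      (hT_int.mono_set Set.subset_union_left) (hT_int.mono_set Set.subset_union_right)]
    have hIic : (∫ x in Set.Iic (cI - 2 * τ), h x ∂volume) = K * τ * (2 * τ)⁻¹ := by
      simp only [hhdef]
      rw [integral_const_mul, invsq_integral_Iic cI (2 * τ) h2τ]
    have hIci : (∫ x in Set.Ici (cI + 2 * τ), h x ∂volume) = K * τ * (2 * τ)⁻¹ := by
      simp only [hhdef]
      rw [integral_Ici_eq_integral_Ioi, integral_const_mul,
        invsq_integral cI (2 * τ) h2τ]
    rw [hIic, hIci, hKdef]
    field_simp
    ring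
  calc (∫ x in S, (⨆ t ∈ Set.Ioc (0 : ℝ) (τ ^ 2),
        ∫ y in J, P t x y * m⁻¹ ∂μ) ∂μ) ≤ ∫ x in S, g x ∂μ := houter
    _ = ∫ x in S, h x ∂volume := hgS
    _ ≤ ∫ x in T, h x ∂volume := hhT
    _ = 16 / 9 * C * c := hTval
    _ ≤ 16 * C * c := by nlinarith
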